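/- Let x ∈ ℝ^N be k-sparse with support T0, |T0| = k, and let T̃ ⊆ {1,…,N} with |T̃| = ρk and |T̃ ∩ T0| = αρk. Suppose T̃ᶜ ∩ T0ᶜ contains no support of x (automatic since supp(x) = T0). Let A be an n×N real matrix with y = Ax (noise-free measurements), and suppose there exists a real a with ak an integer, a ≥ (1−α)ρ, a > 1, such that δ_{ak} + (a/γ²)·δ_{(a+1)k} < a/γ² − 1, where γ = ω + (1−ω)·√(1+ρ−2αρ) for some 0 ≤ ω ≤ 1. Then any x* with Ax* = y and ‖x*‖_{1,w} ≤ ‖x‖_{1,w} (with weights w_i = ω for i ∈ T̃, w_i = 1 otherwise) satisfies x* = x; i.e., weighted ℓ1 minimization recovers x exactly. -/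

import Mathlib

open scoped BigOperators

noncomputable section

/-- The ℓ1 norm of a finite real vector. -/
def l1norm {ι : Type*} [Fintype ι] (v : ι → ℝ) : ℝ := ∑ i, |v i|

/-- The Euclidean (ℓ2) norm of a finite real vector. -/
def l2norm {ι : Type*} [Fintype ι] (v : ι → ℝ) : ℝ := Real.sqrt (∑ i, (v i) ^ 2)

/-- The ℓ∞ norm of a finite real vector. -/
def linfnorm {ι : Type*} [Fintype ι] (v : ι → ℝ) : ℝ := ⨆ i, |v i|

/-- The weighted ℓ1 norm `‖v‖_{1,w} = ∑ i, w i * |v i|`. -/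
def wl1norm {ι : Type*} [Fintype ι] (w v : ι → ℝ) : ℝ := ∑ i, w i * |v i|

/-- `restrict v S` is the vector equal to `v` on `S` and zero outside `S`. -/
def restrict {ι : Type*} [DecidableEq ι] (v : ι → ℝ) (S : Finset ι) : ι → ℝ :=
  fun i => if i ∈ S then v i else 0

/-- A vector is `m`-sparse if it has at most `m` nonzero entries. -/
def IsSparse {ι : Type*} [Fintype ι] (m : ℕ) (v : ι → ℝ) : Prop :=
  (Finset.univ.filter (fun i => v i ≠ 0)).card ≤ m

/-- The restricted isometry constant `δ_m` of a matrix `A`: the smallest `δ ≥ 0` such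
that `(1-δ)‖u‖₂² ≤ ‖Au‖₂² ≤ (1+δ)‖u‖₂²` for every `m`-sparse vector `u`. -/
def ripConst {n N : ℕ} (A : Matrix (Fin n) (Fin N) ℝ) (m : ℕ) : ℝ :=
  sInf {δ : ℝ | 0 ≤ δ ∧ ∀ u : Fin N → ℝ, IsSparse m u →
    (1 - δ) * (∑ i, (u i) ^ 2) ≤ (∑ j, (A.mulVec u j) ^ 2) ∧
    (∑ j, (A.mulVec u j) ^ 2) ≤ (1 + δ) * (∑ i, (u i) ^ 2)}

end


section Aux

/-- The RIP constant is attained: it is nonnegative and satisfies the RIP inequalities. -/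
lemma ripConst_spec {n N : ℕ} (A : Matrix (Fin n) (Fin N) ℝ) (m : ℕ) :
    0 ≤ ripConst A m ∧ ∀ u : Fin N → ℝ, IsSparse m u →
      (1 - ripConst A m) * (∑ i, (u i) ^ 2) ≤ (∑ j, (A.mulVec u j) ^ 2) ∧
      (∑ j, (A.mulVec u j) ^ 2) ≤ (1 + ripConst A m) * (∑ i, (u i) ^ 2) := by
  set S := {δ : ℝ | 0 ≤ δ ∧ ∀ u : Fin N → ℝ, IsSparse m u →
    (1 - δ) * (∑ i, (u i) ^ 2) ≤ (∑ j, (A.mulVec u j) ^ 2) ∧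
    (∑ j, (A.mulVec u j) ^ 2) ≤ (1 + δ) * (∑ i, (u i) ^ 2)} with hS
  have hmem : ripConst A m ∈ S := by
    have hne : S.Nonempty := by
      refine ⟨1 + ∑ j, ∑ i, (A j i) ^ 2, by positivity, fun u _ => ?_⟩
      have hC : (0:ℝ) ≤ ∑ j, ∑ i, (A j i) ^ 2 := by positivity
      have hu : (0:ℝ) ≤ ∑ i, (u i) ^ 2 := by positivity
      constructor
      · have : (1 - (1 + ∑ j, ∑ i, (A j i) ^ 2)) * (∑ i, (u i) ^ 2) ≤ 0 := by
          apply mul_nonpos_of_nonpos_of_nonneg (by linarith) hu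
        exact this.trans (by positivity)
      · have hCS : ∀ j, (A.mulVec u j) ^ 2 ≤ (∑ i, (A j i) ^ 2) * (∑ i, (u i) ^ 2) := by
          intro j
          simpa [Matrix.mulVec, dotProduct] using
            Finset.sum_mul_sq_le_sq_mul_sq Finset.univ (fun i => A j i) u
        calc ∑ j, (A.mulVec u j) ^ 2 ≤ ∑ j, (∑ i, (A j i) ^ 2) * (∑ i, (u i) ^ 2) :=
              Finset.sum_le_sum fun j _ => hCS j
          _ = (∑ j, ∑ i, (A j i) ^ 2) * (∑ i, (u i) ^ 2) := by rw [Finset.sum_mul]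
          _ ≤ (1 + (1 + ∑ j, ∑ i, (A j i) ^ 2)) * (∑ i, (u i) ^ 2) := by nlinarith
    have hbdd : BddBelow S := ⟨0, fun δ hδ => hδ.1⟩
    have hclosed : IsClosed S := by
      have : S = Set.Ici (0:ℝ) ∩ ⋂ (u : Fin N → ℝ) (_ : IsSparse m u),
          ({δ : ℝ | (1 - δ) * (∑ i, (u i) ^ 2) ≤ (∑ j, (A.mulVec u j) ^ 2)} ∩
           {δ : ℝ | (∑ j, (A.mulVec u j) ^ 2) ≤ (1 + δ) * (∑ i, (u i) ^ 2)}) := by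
        ext δ
        simp only [hS, Set.mem_setOf_eq, Set.mem_inter_iff, Set.mem_Ici, Set.mem_iInter]
      rw [this]
      refine isClosed_Ici.inter (isClosed_iInter fun u => isClosed_iInter fun _ => ?_)
      refine IsClosed.inter ?_ ?_
      · exact isClosed_le (by continuity) continuous_const
      · exact isClosed_le continuous_const (by continuity)
    exact hclosed.csInf_mem hne hbdd
  exact ⟨hmem.1, hmem.2⟩

/-- Existence of a "top `m` entries" subset. -/
lemma exists_topSet {ι : Type*} [DecidableEq ι] (v : ι → ℝ) (R : Finset ι) (m : ℕ) :
    ∃ B : Finset ι, B ⊆ R ∧ B.card = min m R.card ∧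
      ∀ i ∈ R, i ∉ B → ∀ j ∈ B, |v i| ≤ |v j| := by
  induction m with
  | zero => exact ⟨∅, Finset.empty_subset _, by simp, by simp⟩
  | succ m ih =>
    obtain ⟨B, hBR, hcard, htop⟩ := ih
    by_cases hBeq : B = R
    · have hRm : R.card ≤ m := by
        have := hcard; rw [hBeq] at this
        omega
      refine ⟨B, hBR, ?_, htop⟩
      rw [hBeq]
      omega
    · have hne : (R \ B).Nonempty := by
        rw [Finset.sdiff_nonempty]
        intro hsub
        exact hBeq (Finset.Subset.antisymm hBR hsub)
      obtain ⟨j, hj, hjmax⟩ := Finset.exists_max_image (R \ B) (fun i => |v i|) hne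
      have hjR : j ∈ R := (Finset.mem_sdiff.1 hj).1
      have hjB : j ∉ B := (Finset.mem_sdiff.1 hj).2
      have hBlt : B.card < R.card := Finset.card_lt_card (Finset.ssubset_iff_subset_ne.2 ⟨hBR, hBeq⟩)
      have hBm : B.card = m := by omega
      refine ⟨insert j B, Finset.insert_subset hjR hBR, ?_, ?_⟩
      · rw [Finset.card_insert_of_notMem hjB, hBm]
        omega
      · intro i hiR hiB l hl
        rcases Finset.mem_insert.1 hl with rfl | hlB
        · exact hjmax i (Finset.mem_sdiff.2 ⟨hiR, fun h => hiB (Finset.mem_insert_of_mem h)⟩)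
        · exact htop i hiR (fun h => hiB (Finset.mem_insert_of_mem h)) l hlB

end Aux

section Aux2

variable {ι : Type*} [DecidableEq ι]

lemma restrict_split (v : ι → ℝ) {B S : Finset ι} (hBS : B ⊆ S) :
    restrict v S = restrict v B + restrict v (S \ B) := by
  funext i
  simp only [restrict, Pi.add_apply, Finset.mem_sdiff]
  by_cases hB : i ∈ B
  · simp [hB, hBS hB]
  · by_cases hSi : i ∈ S <;> simp [hB, hSi]

lemma restrict_sq_sum [Fintype ι] (v : ι → ℝ) (S : Finset ι) :
    ∑ i, (restrict v S i) ^ 2 = ∑ i ∈ S, (v i) ^ 2 := by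
  rw [← Finset.sum_filter_add_sum_filter_not Finset.univ (· ∈ S)]
  have h1 : ∀ i ∈ Finset.univ.filter (· ∈ S), (restrict v S i) ^ 2 = (v i) ^ 2 := by
    intro i hi; simp only [Finset.mem_filter] at hi; simp [restrict, hi.2]
  have h2 : ∀ i ∈ Finset.univ.filter (¬ · ∈ S), (restrict v S i) ^ 2 = 0 := by
    intro i hi; simp only [Finset.mem_filter] at hi; simp [restrict, hi.2]
  rw [Finset.sum_congr rfl h1, Finset.sum_congr rfl h2, Finset.sum_const_zero, add_zero,
    Finset.filter_mem_eq_inter, Finset.univ_inter]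

lemma restrict_sparse [Fintype ι] (v : ι → ℝ) (S : Finset ι) {m : ℕ} (hm : S.card ≤ m) :
    IsSparse m (restrict v S) := by
  refine le_trans (Finset.card_le_card ?_) hm
  intro i hi
  simp only [Finset.mem_filter, restrict] at hi
  by_contra hiS
  simp [hiS] at hi

/-- Comparison with the top set: any subset of `R` of size at most `m` has smaller
sum of squares than the top set. -/
lemma sum_sq_le_topSet (v : ι → ℝ) {R B S : Finset ι} {m : ℕ} (hB : B ⊆ R)
    (hcard : B.card = min m R.card)
    (htop : ∀ i ∈ R, i ∉ B → ∀ j ∈ B, |v i| ≤ |v j|)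
    (hS : S ⊆ R) (hSm : S.card ≤ m) :
    ∑ i ∈ S, (v i) ^ 2 ≤ ∑ i ∈ B, (v i) ^ 2 := by
  have hsplitS : ∑ i ∈ S, (v i) ^ 2 = ∑ i ∈ S ∩ B, (v i) ^ 2 + ∑ i ∈ S \ B, (v i) ^ 2 := by
    rw [← Finset.sum_union (Finset.disjoint_sdiff_inter S B).symm]
    · congr 1
      ext i; simp only [Finset.mem_union, Finset.mem_inter, Finset.mem_sdiff]; tauto
  have hsplitB : ∑ i ∈ B, (v i) ^ 2 = ∑ i ∈ S ∩ B, (v i) ^ 2 + ∑ i ∈ B \ S, (v i) ^ 2 := by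
    rw [Finset.inter_comm, ← Finset.sum_union (Finset.disjoint_sdiff_inter B S).symm]
    · congr 1
      ext i; simp only [Finset.mem_union, Finset.mem_inter, Finset.mem_sdiff]; tauto
  rw [hsplitS, hsplitB]
  have hkey : ∑ i ∈ S \ B, (v i) ^ 2 ≤ ∑ i ∈ B \ S, (v i) ^ 2 := by
    rcases Finset.eq_empty_or_nonempty (S \ B) with he | hne
    · rw [he, Finset.sum_empty]
      positivity
    · have hcardle : (S \ B).card ≤ (B \ S).card := by
        have h1 := Finset.card_sdiff_add_card_inter S B
        have h2 := Finset.card_sdiff_add_card_inter B S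
        have hSB : S.card ≤ B.card := by
          rcases le_or_gt R.card m with hRm | hRm
          · have : B = R := Finset.eq_of_subset_of_card_le hB (by omega)
            exact Finset.card_le_card (this ▸ hS)
          · have : B.card = m := by omega
            omega
        rw [Finset.inter_comm B S] at h2
        omega
      obtain ⟨j0, hj0, hj0min⟩ := Finset.exists_min_image (B \ S) (fun j => |v j|)
        (Finset.card_pos.1 (lt_of_lt_of_le (Finset.card_pos.2 hne) hcardle))
      have hj0B : j0 ∈ B := (Finset.mem_sdiff.1 hj0).1
      have h1 : ∑ i ∈ S \ B, (v i) ^ 2 ≤ (S \ B).card * |v j0| ^ 2 := by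
        rw [← nsmul_eq_mul]
        apply Finset.sum_le_card_nsmul
        intro i hi
        have hiR : i ∈ R := hS (Finset.mem_sdiff.1 hi).1
        have hle : |v i| ≤ |v j0| := htop i hiR (Finset.mem_sdiff.1 hi).2 j0 hj0B
        calc (v i) ^ 2 = |v i| ^ 2 := (sq_abs _).symm
          _ ≤ |v j0| ^ 2 := by
            apply pow_le_pow_left₀ (abs_nonneg _) hle
      have h2 : ((B \ S).card : ℝ) * |v j0| ^ 2 ≤ ∑ i ∈ B \ S, (v i) ^ 2 := by
        rw [← nsmul_eq_mul]
        apply Finset.card_nsmul_le_sum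
        intro j hj
        calc |v j0| ^ 2 ≤ |v j| ^ 2 := by
              apply pow_le_pow_left₀ (abs_nonneg _) (hj0min j hj)
          _ = (v j) ^ 2 := sq_abs _
      have h3 : ((S \ B).card : ℝ) * |v j0| ^ 2 ≤ ((B \ S).card : ℝ) * |v j0| ^ 2 := by
        apply mul_le_mul_of_nonneg_right _ (by positivity)
        exact_mod_cast hcardle
      linarith
  linarith

end Aux2

section Aux3

variable {ι : Type*} [DecidableEq ι] [Fintype ι]

/-- Two-term ℓ2 triangle inequality for sums of squares. -/
lemma sqrt_sum_sq_add_le {κ : Type*} [Fintype κ] (u v : κ → ℝ) :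
    Real.sqrt (∑ j, (u j + v j) ^ 2) ≤
      Real.sqrt (∑ j, (u j) ^ 2) + Real.sqrt (∑ j, (v j) ^ 2) := by
  set au := Real.sqrt (∑ j, (u j) ^ 2) with hau
  set av := Real.sqrt (∑ j, (v j) ^ 2) with hav
  have hau2 : au ^ 2 = ∑ j, (u j) ^ 2 := Real.sq_sqrt (by positivity)
  have hav2 : av ^ 2 = ∑ j, (v j) ^ 2 := Real.sq_sqrt (by positivity)
  have hcs : ∑ j, u j * v j ≤ au * av := by
    rw [hau, hav]
    exact Real.sum_mul_le_sqrt_mul_sqrt Finset.univ u v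
  have h1 : ∑ j, (u j + v j) ^ 2 ≤ (au + av) ^ 2 := by
    have : ∑ j, (u j + v j) ^ 2 = ∑ j, (u j) ^ 2 + 2 * ∑ j, u j * v j + ∑ j, (v j) ^ 2 := by
      have expand : ∀ j, (u j + v j) ^ 2 = (u j) ^ 2 + 2 * (u j * v j) + (v j) ^ 2 :=
        fun j => by ring
      simp_rw [expand]
      rw [Finset.sum_add_distrib, Finset.sum_add_distrib, ← Finset.mul_sum]
    rw [this]
    nlinarith [Real.sqrt_nonneg (∑ j, (u j) ^ 2), Real.sqrt_nonneg (∑ j, (v j) ^ 2)]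
  calc Real.sqrt (∑ j, (u j + v j) ^ 2) ≤ Real.sqrt ((au + av) ^ 2) := Real.sqrt_le_sqrt h1
    _ = au + av := Real.sqrt_sq (by positivity)

/-- ℓ2 triangle inequality for list sums. -/
lemma sqrt_sum_sq_list_le {κ : Type*} [Fintype κ] (L : List (κ → ℝ)) :
    Real.sqrt (∑ j, (L.sum j) ^ 2) ≤ (L.map (fun u => Real.sqrt (∑ j, (u j) ^ 2))).sum := by
  induction L with
  | nil => simp
  | cons u L ih =>
    simp only [List.sum_cons, List.map_cons]
    calc Real.sqrt (∑ j, ((u + L.sum) j) ^ 2)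
        ≤ Real.sqrt (∑ j, (u j) ^ 2) + Real.sqrt (∑ j, (L.sum j) ^ 2) :=
          sqrt_sum_sq_add_le u L.sum
      _ ≤ _ := by
          exact add_le_add le_rfl ih

/-- Greedy block decomposition of `R \ B` (where `B` is the top block of `R`), with
the standard ℓ2/ℓ1 bound on the sum of block ℓ2 norms. -/
lemma exists_blocks (v : ι → ℝ) (m : ℕ) (hm : 1 ≤ m) :
    ∀ R : Finset ι, ∀ B : Finset ι, B ⊆ R → B.card = min m R.card →
    (∀ i ∈ R, i ∉ B → ∀ j ∈ B, |v i| ≤ |v j|) →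
    ∃ L : List (Finset ι),
      (∀ C ∈ L, C.card ≤ m) ∧
      ((L.map (restrict v)).sum = restrict v (R \ B)) ∧
      ((L.map (fun C => Real.sqrt (∑ i ∈ C, (v i) ^ 2))).sum
        ≤ (∑ i ∈ R, |v i|) / Real.sqrt m) := by
  intro R
  induction R using Finset.strongInduction with
  | _ R IH =>
    intro B hBR hBcard htop
    by_cases hRm : R.card ≤ m
    · have hBeq : B = R := Finset.eq_of_subset_of_card_le hBR (by omega)
      refine ⟨[], by simp, ?_, ?_⟩
      · simp [hBeq]
        funext i
        simp [restrict]
      · simp only [List.map_nil, List.sum_nil]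
        positivity
    · push_neg at hRm
      have hBm : B.card = m := by omega
      have hBne : B.Nonempty := Finset.card_pos.1 (by omega)
      have hss : R \ B ⊂ R := Finset.sdiff_ssubset hBR hBne
      obtain ⟨B', hB'sub, hB'card, hB'top⟩ := exists_topSet v (R \ B) m
      obtain ⟨L', hL'card, hL'sum, hL'bound⟩ := IH (R \ B) hss B' hB'sub hB'card hB'top
      refine ⟨B' :: L', ?_, ?_, ?_⟩
      · intro C hC
        rcases List.mem_cons.1 hC with rfl | hC'
        · omega
        · exact hL'card C hC'
      · simp only [List.map_cons, List.sum_cons, hL'sum]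
        rw [← restrict_split v hB'sub]
      · simp only [List.map_cons, List.sum_cons]
        set sB := ∑ i ∈ B, |v i| with hsB
        have hsBnn : 0 ≤ sB := Finset.sum_nonneg fun i _ => abs_nonneg _
        have hmR : (0:ℝ) < m := by exact_mod_cast hm
        have hentry : ∀ i ∈ B', |v i| ≤ sB / m := by
          intro i hi
          have hiRB : i ∈ R \ B := hB'sub hi
          have h1 : ∀ j ∈ B, |v i| ≤ |v j| :=
            htop i (Finset.mem_sdiff.1 hiRB).1 (Finset.mem_sdiff.1 hiRB).2
          have h2 : (B.card : ℝ) * |v i| ≤ sB := by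
            rw [← nsmul_eq_mul]
            exact Finset.card_nsmul_le_sum B (fun j => |v j|) _ h1
          rw [hBm] at h2
          rw [le_div_iff₀ hmR]
          linarith
        have hB'm : B'.card ≤ m := by omega
        have hB'bound : Real.sqrt (∑ i ∈ B', (v i) ^ 2) ≤ sB / Real.sqrt m := by
          have h1 : ∑ i ∈ B', (v i) ^ 2 ≤ (B'.card : ℝ) * (sB / m) ^ 2 := by
            rw [← nsmul_eq_mul]
            apply Finset.sum_le_card_nsmul
            intro i hi
            calc (v i) ^ 2 = |v i| ^ 2 := (sq_abs _).symm
              _ ≤ (sB / m) ^ 2 := pow_le_pow_left₀ (abs_nonneg _) (hentry i hi) 2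
          have h2 : ((B'.card : ℝ)) * (sB / m) ^ 2 ≤ (m : ℝ) * (sB / m) ^ 2 := by
            apply mul_le_mul_of_nonneg_right _ (by positivity)
            exact_mod_cast hB'm
          have h3 : (m : ℝ) * (sB / m) ^ 2 = sB ^ 2 / m := by
            field_simp
          calc Real.sqrt (∑ i ∈ B', (v i) ^ 2) ≤ Real.sqrt (sB ^ 2 / m) := by
                apply Real.sqrt_le_sqrt
                linarith
            _ = sB / Real.sqrt m := by
                rw [Real.sqrt_div (by positivity), Real.sqrt_sq hsBnn]
        have hsum : sB / Real.sqrt m + (∑ i ∈ R \ B, |v i|) / Real.sqrt m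
            = (∑ i ∈ R, |v i|) / Real.sqrt m := by
          rw [← add_div]
          congr 1
          rw [add_comm]
          exact Finset.sum_sdiff hBR
        linarith [hL'bound]

end Aux3

section Aux4

lemma mulVec_list_sum {n N : ℕ} (A : Matrix (Fin n) (Fin N) ℝ) (L : List (Fin N → ℝ)) :
    A.mulVec L.sum = (L.map A.mulVec).sum := by
  induction L with
  | nil => simp [Matrix.mulVec_zero]
  | cons u L ih => simp [Matrix.mulVec_add, ih]

lemma list_sum_map_le {β : Type*} (L : List β) (f g : β → ℝ) (h : ∀ x ∈ L, f x ≤ g x) :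
    (L.map f).sum ≤ (L.map g).sum := by
  induction L with
  | nil => simp
  | cons u L ih =>
    simp only [List.map_cons, List.sum_cons]
    have h1 := h u List.mem_cons_self
    have h2 := ih fun x hx => h x (List.mem_cons_of_mem u hx)
    linarith

end Aux4

set_option maxHeartbeats 2000000 in
/-- exact recovery of a `k`-sparse signal from noise-free measurements via
weighted ℓ1 minimization with partial support information. -/
theorem weighted_l1_exact_recovery
    {n N : ℕ} (A : Matrix (Fin n) (Fin N) ℝ)
    (x : Fin N → ℝ)
    (k ak : ℕ) (a ρ α ω γ : ℝ)
    (T0 Tt : Finset (Fin N)) (w : Fin N → ℝ)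
    (hk : 1 ≤ k)
    -- `x` is `k`-sparse with support `T0`, `|T0| = k`
    (hT0card : T0.card = k)
    (hsupp : ∀ i, x i ≠ 0 → i ∈ T0)
    -- the support estimate `Tt` has `|Tt| = ρk` and `|Tt ∩ T0| = αρk`
    (hTtcard : (Tt.card : ℝ) = ρ * k)
    (hTtT0card : ((Tt ∩ T0).card : ℝ) = α * ρ * k)
    -- `a` is a real number with `ak` an integer, `a ≥ (1-α)ρ`, `a > 1`
    (hak : (ak : ℝ) = a * k)
    (ha : 1 < a)
    (haαρ : (1 - α) * ρ ≤ a)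
    -- the weight `ω ∈ [0,1]` and `γ = ω + (1-ω)√(1+ρ-2αρ)`
    (hω0 : 0 ≤ ω) (hω1 : ω ≤ 1)
    (hγ : γ = ω + (1 - ω) * Real.sqrt (1 + ρ - 2 * α * ρ))
    -- RIP condition: `δ_{ak} + (a/γ²) δ_{(a+1)k} < a/γ² - 1`
    (hRIP : ripConst A ak + (a / γ ^ 2) * ripConst A (ak + k) < a / γ ^ 2 - 1)
    -- the weights: `ω` on `Tt`, `1` on `Ttᶜ`
    (hw : ∀ i, w i = if i ∈ Tt then ω else 1)
    -- `xs` is any solution of the noise-free weighted ℓ1 problem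
    (xs : Fin N → ℝ)
    (hfeas : A.mulVec xs = A.mulVec x)
    (hopt : wl1norm w xs ≤ wl1norm w x) :
    xs = x := by
  classical
  obtain ⟨hδ1nn, hδ1⟩ := ripConst_spec A ak
  obtain ⟨hδ2nn, hδ2⟩ := ripConst_spec A (ak + k)
  set δ1 := ripConst A ak with hδ1def
  set δ2 := ripConst A (ak + k) with hδ2def
  have hkR : (0:ℝ) < k := by exact_mod_cast hk
  have haa : (0:ℝ) < a := by linarith
  have hγnn : 0 ≤ γ := by
    have := Real.sqrt_nonneg (1 + ρ - 2 * α * ρ); nlinarith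
  have hγpos : 0 < γ := by
    rcases eq_or_lt_of_le hγnn with hγ0 | h
    · exfalso; rw [← hγ0] at hRIP; norm_num at hRIP; linarith
    · exact h
  have hg2 : (0:ℝ) < γ ^ 2 := by positivity
  have hakpos : (0:ℝ) < ak := by rw [hak]; positivity
  have hak0 : 0 < ak := by exact_mod_cast hakpos
  have hak1 : 1 ≤ ak := hak0
  -- the error vector
  set h : Fin N → ℝ := xs - x with hdef
  have happ : ∀ i, h i = xs i - x i := fun i => rfl
  have hAh : A.mulVec h = 0 := by
    rw [hdef, Matrix.mulVec_sub, hfeas, sub_self]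
  have hx0 : ∀ i, i ∉ T0 → x i = 0 := by
    intro i hi; by_contra hne; exact hi (hsupp i hne)
  -- top block of T0ᶜ and greedy decomposition
  obtain ⟨T1, hT1sub, hT1card, hT1top⟩ := exists_topSet h T0ᶜ ak
  obtain ⟨L, hLcard, hLsum, hLbound⟩ := exists_blocks h ak hak1 T0ᶜ T1 hT1sub hT1card hT1top
  set T01 : Finset (Fin N) := T0 ∪ T1 with hT01def
  have hdis : Disjoint T0 T1 := by
    rw [Finset.disjoint_left]
    intro i hi hiT1
    exact (Finset.mem_compl.1 (hT1sub hiT1)) hi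
  have hT01card : T01.card ≤ ak + k := by
    have h1 : T01.card = T0.card + T1.card := Finset.card_union_of_disjoint hdis
    have h2 : T1.card ≤ ak := by omega
    omega
  set s : ℝ := ∑ i ∈ T01, (h i) ^ 2 with hsdef
  have hsnn : 0 ≤ s := by positivity
  -- nonnegative weights
  have hwnn : ∀ i, 0 ≤ w i := by
    intro i; rw [hw]; split <;> norm_num
    exact hω0
  -- cone constraint in weighted form
  have hKey : ∑ i ∈ T0ᶜ, w i * |h i| ≤ ∑ i ∈ T0, w i * |h i| := by
    unfold wl1norm at hopt
    rw [← Finset.sum_add_sum_compl T0 (fun i => w i * |xs i|),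
        ← Finset.sum_add_sum_compl T0 (fun i => w i * |x i|)] at hopt
    have hx0sum : ∑ i ∈ T0ᶜ, w i * |x i| = 0 :=
      Finset.sum_eq_zero fun i hi => by
        rw [hx0 i (Finset.mem_compl.1 hi), abs_zero, mul_zero]
    rw [hx0sum, add_zero] at hopt
    have hhxs : ∑ i ∈ T0ᶜ, w i * |h i| = ∑ i ∈ T0ᶜ, w i * |xs i| :=
      Finset.sum_congr rfl fun i hi => by
        rw [happ i, hx0 i (Finset.mem_compl.1 hi), sub_zero]
    have hterm : ∀ i ∈ T0, w i * |x i| - w i * |xs i| ≤ w i * |h i| := by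
      intro i _
      have habs : |x i| - |xs i| ≤ |h i| := by
        have h1 := abs_sub_abs_le_abs_sub (x i) (xs i)
        have h2 : |x i - xs i| = |h i| := by rw [happ i, abs_sub_comm]
        linarith
      calc w i * |x i| - w i * |xs i| = w i * (|x i| - |xs i|) := by ring
        _ ≤ w i * |h i| := mul_le_mul_of_nonneg_left habs (hwnn i)
    have hsum := Finset.sum_le_sum hterm
    rw [Finset.sum_sub_distrib] at hsum
    linarith [hhxs, hopt, hsum]
  -- weight expansion
  have hpartS : ∀ S : Finset (Fin N), S ∩ Tt ∪ S \ Tt = S := by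
    intro S
    ext i; simp only [Finset.mem_union, Finset.mem_inter, Finset.mem_sdiff]; tauto
  have hdispS : ∀ S : Finset (Fin N), Disjoint (S ∩ Tt) (S \ Tt) := by
    intro S
    rw [Finset.disjoint_left]; intro i hi1 hi2
    exact (Finset.mem_sdiff.1 hi2).2 (Finset.mem_inter.1 hi1).2
  have hwexp : ∀ S : Finset (Fin N),
      ∑ i ∈ S, w i * |h i| = ω * (∑ i ∈ S ∩ Tt, |h i|) + ∑ i ∈ S \ Tt, |h i| := by
    intro S
    conv_lhs => rw [← hpartS S]
    rw [Finset.sum_union (hdispS S)]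
    congr 1
    · rw [Finset.mul_sum]
      apply Finset.sum_congr rfl
      intro i hi
      rw [hw i, if_pos (Finset.mem_inter.1 hi).2]
    · apply Finset.sum_congr rfl
      intro i hi
      rw [hw i, if_neg (Finset.mem_sdiff.1 hi).2, one_mul]
  have hsplit1 : ∀ S : Finset (Fin N),
      ∑ i ∈ S, |h i| = (∑ i ∈ S ∩ Tt, |h i|) + ∑ i ∈ S \ Tt, |h i| := by
    intro S
    conv_lhs => rw [← hpartS S]
    rw [Finset.sum_union (hdispS S)]
  set TΔ : Finset (Fin N) := (Tt \ T0) ∪ (T0 \ Tt) with hTΔdef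
  have hdisTΔ : Disjoint (Tt \ T0) (T0 \ Tt) := by
    rw [Finset.disjoint_left]; intro i hi1 hi2
    exact (Finset.mem_sdiff.1 hi1).2 (Finset.mem_sdiff.1 hi2).1
  have hTtT0 : Tt \ T0 = T0ᶜ ∩ Tt := by
    ext i; simp only [Finset.mem_sdiff, Finset.mem_inter, Finset.mem_compl]; tauto
  -- cone inequality, unweighted form
  have hcone1 : ∑ i ∈ T0ᶜ, |h i| ≤ ω * ∑ i ∈ T0, |h i| + (1 - ω) * ∑ i ∈ TΔ, |h i| := by
    have e1 := hwexp T0ᶜ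
    have e2 := hwexp T0
    have e3 := hsplit1 T0ᶜ
    have e4 := hsplit1 T0
    have e5 : ∑ i ∈ TΔ, |h i| = (∑ i ∈ T0ᶜ ∩ Tt, |h i|) + ∑ i ∈ T0 \ Tt, |h i| := by
      rw [hTΔdef, Finset.sum_union hdisTΔ, hTtT0]
    rw [e1, e2] at hKey
    have e6 : T0 ∩ Tt = T0 \ (T0 \ Tt) := by
      ext i; simp only [Finset.mem_inter, Finset.mem_sdiff]; tauto
    nlinarith [hKey, e3, e4, e5]
  -- cardinality computations
  have hc1 : ((Tt \ T0).card : ℝ) = ρ * k - α * ρ * k := by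
    have := Finset.card_sdiff_add_card_inter Tt T0
    have hcast : ((Tt \ T0).card : ℝ) + ((Tt ∩ T0).card : ℝ) = (Tt.card : ℝ) := by
      exact_mod_cast congrArg (Nat.cast : ℕ → ℝ) this
    rw [hTtT0card, hTtcard] at hcast
    linarith
  have hc1m : (Tt \ T0).card ≤ ak := by
    have hmul := mul_le_mul_of_nonneg_right haαρ (le_of_lt hkR)
    have : ((Tt \ T0).card : ℝ) ≤ (ak : ℝ) := by
      rw [hc1, hak]
      linarith [hmul]
    exact_mod_cast this
  have hc2 : ((T0 \ Tt).card : ℝ) = k - α * ρ * k := by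
    have := Finset.card_sdiff_add_card_inter T0 Tt
    have hcast : ((T0 \ Tt).card : ℝ) + ((T0 ∩ Tt).card : ℝ) = (T0.card : ℝ) := by
      exact_mod_cast congrArg (Nat.cast : ℕ → ℝ) this
    rw [Finset.inter_comm] at hcast
    rw [hTtT0card, hT0card] at hcast
    linarith
  have hTΔcard : (TΔ.card : ℝ) = (1 + ρ - 2 * α * ρ) * k := by
    rw [hTΔdef]
    have := Finset.card_union_of_disjoint hdisTΔ
    have hcast : (((Tt \ T0) ∪ (T0 \ Tt)).card : ℝ)
        = ((Tt \ T0).card : ℝ) + ((T0 \ Tt).card : ℝ) := by exact_mod_cast this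
    rw [hcast, hc1, hc2]; ring
  have hρnn : 0 ≤ 1 + ρ - 2 * α * ρ := by
    have h0 : (0:ℝ) ≤ (TΔ.card : ℝ) := Nat.cast_nonneg _
    rw [hTΔcard] at h0
    exact (mul_nonneg_iff_of_pos_right hkR).1 h0
  -- Cauchy–Schwarz for ℓ1 vs ℓ2 on a finset
  have hCS : ∀ S : Finset (Fin N),
      ∑ i ∈ S, |h i| ≤ Real.sqrt S.card * Real.sqrt (∑ i ∈ S, (h i) ^ 2) := by
    intro S
    have h2 := Real.sum_mul_le_sqrt_mul_sqrt S (fun _ => (1:ℝ)) (fun i => |h i|)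
    have h3 : ∑ i ∈ S, ((1:ℝ)) ^ 2 = (S.card : ℝ) := by simp
    have h4 : ∑ i ∈ S, |h i| ^ 2 = ∑ i ∈ S, (h i) ^ 2 := by simp [sq_abs]
    simp only [one_mul] at h2
    rw [h3, h4] at h2
    exact h2
  -- comparisons of sums of squares
  have hmono : ∀ S T : Finset (Fin N), S ⊆ T →
      ∑ i ∈ S, (h i) ^ 2 ≤ ∑ i ∈ T, (h i) ^ 2 := by
    intro S T hST
    exact Finset.sum_le_sum_of_subset_of_nonneg hST fun i _ _ => sq_nonneg _
  have hsT0T1 : s = ∑ i ∈ T0, (h i) ^ 2 + ∑ i ∈ T1, (h i) ^ 2 := by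
    rw [hsdef, hT01def, Finset.sum_union hdis]
  have hTΔsq : ∑ i ∈ TΔ, (h i) ^ 2 ≤ s := by
    have h1 : ∑ i ∈ TΔ, (h i) ^ 2
        = ∑ i ∈ Tt \ T0, (h i) ^ 2 + ∑ i ∈ T0 \ Tt, (h i) ^ 2 := by
      rw [hTΔdef, Finset.sum_union hdisTΔ]
    have h2 : ∑ i ∈ Tt \ T0, (h i) ^ 2 ≤ ∑ i ∈ T1, (h i) ^ 2 := by
      apply sum_sq_le_topSet h hT1sub hT1card hT1top _ hc1m
      intro i hi
      simp only [Finset.mem_compl]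
      exact (Finset.mem_sdiff.1 hi).2
    have h3 : ∑ i ∈ T0 \ Tt, (h i) ^ 2 ≤ ∑ i ∈ T0, (h i) ^ 2 :=
      hmono _ _ (Finset.sdiff_subset)
    linarith [hsT0T1]
  -- final cone bound
  have hconeFinal : ∑ i ∈ T0ᶜ, |h i| ≤ γ * Real.sqrt k * Real.sqrt s := by
    have hT1nn : (0:ℝ) ≤ ∑ i ∈ T1, (h i) ^ 2 := Finset.sum_nonneg fun i _ => sq_nonneg _
    have hD : Real.sqrt (∑ i ∈ T0, (h i) ^ 2) ≤ Real.sqrt s :=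
      Real.sqrt_le_sqrt (by linarith [hsT0T1])
    have hDΔ : Real.sqrt (∑ i ∈ TΔ, (h i) ^ 2) ≤ Real.sqrt s := Real.sqrt_le_sqrt hTΔsq
    have hb1 : ∑ i ∈ T0, |h i| ≤ Real.sqrt k * Real.sqrt s := by
      have h5 := hCS T0
      rw [hT0card] at h5
      calc ∑ i ∈ T0, |h i| ≤ Real.sqrt k * Real.sqrt (∑ i ∈ T0, (h i) ^ 2) := h5
        _ ≤ Real.sqrt k * Real.sqrt s := mul_le_mul_of_nonneg_left hD (Real.sqrt_nonneg _)
    have hb2 : ∑ i ∈ TΔ, |h i|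
        ≤ Real.sqrt (1 + ρ - 2 * α * ρ) * Real.sqrt k * Real.sqrt s := by
      have h5 := hCS TΔ
      have h6 : Real.sqrt (TΔ.card : ℝ) = Real.sqrt (1 + ρ - 2 * α * ρ) * Real.sqrt k := by
        rw [hTΔcard, Real.sqrt_mul hρnn]
      calc ∑ i ∈ TΔ, |h i| ≤ Real.sqrt (TΔ.card : ℝ) * Real.sqrt (∑ i ∈ TΔ, (h i) ^ 2) := h5
        _ ≤ Real.sqrt (TΔ.card : ℝ) * Real.sqrt s :=
            mul_le_mul_of_nonneg_left hDΔ (Real.sqrt_nonneg _)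
        _ = Real.sqrt (1 + ρ - 2 * α * ρ) * Real.sqrt k * Real.sqrt s := by rw [h6]
    have hω1' : (0:ℝ) ≤ 1 - ω := by linarith
    calc ∑ i ∈ T0ᶜ, |h i| ≤ ω * ∑ i ∈ T0, |h i| + (1 - ω) * ∑ i ∈ TΔ, |h i| := hcone1
      _ ≤ ω * (Real.sqrt k * Real.sqrt s)
          + (1 - ω) * (Real.sqrt (1 + ρ - 2 * α * ρ) * Real.sqrt k * Real.sqrt s) :=
            add_le_add (mul_le_mul_of_nonneg_left hb1 hω0)
              (mul_le_mul_of_nonneg_left hb2 hω1')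
      _ = γ * Real.sqrt k * Real.sqrt s := by rw [hγ]; ring
  -- the RIP chain
  have hfin : (1 - δ2) * s ≤ (1 + δ1) * (γ ^ 2 * s / a) := by
    set h1v : Fin N → ℝ := restrict h T01 with hh1v
    have hs_eq : ∑ i, (h1v i) ^ 2 = s := by rw [hh1v, restrict_sq_sum, hsdef]
    have hsp1 : IsSparse (ak + k) h1v := restrict_sparse h T01 hT01card
    have hlow := (hδ2 h1v hsp1).1
    rw [hs_eq] at hlow
    set L1 := L.map (restrict h) with hL1
    set q : ℝ := ∑ j, (A.mulVec h1v j) ^ 2 with hqdef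
    have hTcompl : Finset.univ \ T01 = T0ᶜ \ T1 := by
      ext i
      simp only [Finset.mem_sdiff, Finset.mem_univ, true_and, hT01def,
        Finset.mem_union, Finset.mem_compl]
      tauto
    have huniv : restrict h Finset.univ = h := funext fun i => by simp [restrict]
    have hdecomp : h = h1v + L1.sum := by
      rw [hLsum, ← hTcompl, hh1v, ← restrict_split h (Finset.subset_univ T01), huniv]
    have hA1 : A.mulVec h1v = - A.mulVec L1.sum := by
      have h5 : A.mulVec h1v + A.mulVec L1.sum = 0 := by
        rw [← Matrix.mulVec_add, ← hdecomp, hAh]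
      exact eq_neg_of_add_eq_zero_left h5
    have hq2 : q = ∑ j, ((A.mulVec L1.sum) j) ^ 2 := by
      rw [hqdef, hA1]
      simp
    set L2 := L1.map A.mulVec with hL2
    have hsum2 : L2.sum = A.mulVec L1.sum := (mulVec_list_sum A L1).symm
    have htri := sqrt_sum_sq_list_le L2
    rw [hsum2] at htri
    have hq5 : Real.sqrt q ≤ (L2.map (fun u => Real.sqrt (∑ j, (u j) ^ 2))).sum := by
      rw [hq2]
      exact htri
    have hmm : (L2.map (fun u => Real.sqrt (∑ j, (u j) ^ 2))).sum
        = (L.map (fun C => Real.sqrt (∑ j, (A.mulVec (restrict h C) j) ^ 2))).sum := by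
      rw [hL2, hL1, List.map_map, List.map_map]
      rfl
    have hterm : ∀ C ∈ L, Real.sqrt (∑ j, (A.mulVec (restrict h C) j) ^ 2)
        ≤ Real.sqrt (1 + δ1) * Real.sqrt (∑ i ∈ C, (h i) ^ 2) := by
      intro C hC
      have hspC : IsSparse ak (restrict h C) := restrict_sparse h C (hLcard C hC)
      have hup := (hδ1 (restrict h C) hspC).2
      have h6 : Real.sqrt (∑ j, (A.mulVec (restrict h C) j) ^ 2)
          ≤ Real.sqrt ((1 + δ1) * (∑ i, (restrict h C i) ^ 2)) := Real.sqrt_le_sqrt hup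
      rw [Real.sqrt_mul (by linarith : (0:ℝ) ≤ 1 + δ1), restrict_sq_sum] at h6
      exact h6
    have hq6 : (L.map (fun C => Real.sqrt (∑ j, (A.mulVec (restrict h C) j) ^ 2))).sum
        ≤ Real.sqrt (1 + δ1) * (L.map (fun C => Real.sqrt (∑ i ∈ C, (h i) ^ 2))).sum := by
      rw [← List.sum_map_mul_left]
      exact list_sum_map_le L _ _ hterm
    have hsqak : (0:ℝ) < Real.sqrt ak := Real.sqrt_pos.2 hakpos
    have hq7 : Real.sqrt q
        ≤ Real.sqrt (1 + δ1) * ((γ * Real.sqrt k * Real.sqrt s) / Real.sqrt ak) := by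
      have s1 : Real.sqrt q
          ≤ Real.sqrt (1 + δ1) * ((∑ i ∈ T0ᶜ, |h i|) / Real.sqrt ak) := by
        calc Real.sqrt q ≤ (L2.map (fun u => Real.sqrt (∑ j, (u j) ^ 2))).sum := hq5
          _ = (L.map (fun C => Real.sqrt (∑ j, (A.mulVec (restrict h C) j) ^ 2))).sum := hmm
          _ ≤ Real.sqrt (1 + δ1) * (L.map (fun C => Real.sqrt (∑ i ∈ C, (h i) ^ 2))).sum := hq6
          _ ≤ Real.sqrt (1 + δ1) * ((∑ i ∈ T0ᶜ, |h i|) / Real.sqrt ak) :=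
              mul_le_mul_of_nonneg_left hLbound (Real.sqrt_nonneg _)
      apply le_trans s1
      apply mul_le_mul_of_nonneg_left _ (Real.sqrt_nonneg _)
      exact (div_le_div_iff_of_pos_right hsqak).2 hconeFinal
    have hqnn : (0:ℝ) ≤ q := by rw [hqdef]; positivity
    have hsq := pow_le_pow_left₀ (Real.sqrt_nonneg q) hq7 2
    rw [Real.sq_sqrt hqnn] at hsq
    have hrhs : (Real.sqrt (1 + δ1) * ((γ * Real.sqrt k * Real.sqrt s) / Real.sqrt ak)) ^ 2
        = (1 + δ1) * (γ ^ 2 * ((k:ℝ) * s) / ((ak:ℝ))) := by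
      rw [mul_pow, div_pow, mul_pow, mul_pow,
        Real.sq_sqrt (by linarith : (0:ℝ) ≤ 1 + δ1),
        Real.sq_sqrt (le_of_lt hkR), Real.sq_sqrt hsnn,
        Real.sq_sqrt (le_of_lt hakpos)]
      ring
    rw [hrhs] at hsq
    have hkne : (k:ℝ) ≠ 0 := ne_of_gt hkR
    have hane : a ≠ 0 := ne_of_gt haa
    have heq : (1 + δ1) * (γ ^ 2 * ((k:ℝ) * s) / ((ak:ℝ))) = (1 + δ1) * (γ ^ 2 * s / a) := by
      rw [hak]
      field_simp
    rw [heq] at hsq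
    exact le_trans hlow hsq
  -- conclude s = 0
  have hkey2 : (1 + δ1) * γ ^ 2 < (1 - δ2) * a := by
    have h' : 1 + δ1 < (a / γ ^ 2) * (1 - δ2) := by
      have expand : (a / γ ^ 2) * (1 - δ2) = a / γ ^ 2 - (a / γ ^ 2) * δ2 := by ring
      rw [expand]
      linarith
    calc (1 + δ1) * γ ^ 2 < ((a / γ ^ 2) * (1 - δ2)) * γ ^ 2 :=
          mul_lt_mul_of_pos_right h' hg2
      _ = (1 - δ2) * a := by field_simp
  have hs0 : s = 0 := by
    by_contra hne
    have hpos : 0 < s := lt_of_le_of_ne hsnn (Ne.symm hne)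
    have h1 : (1 + δ1) * γ ^ 2 * s < (1 - δ2) * a * s :=
      mul_lt_mul_of_pos_right hkey2 hpos
    have h2 : (1 - δ2) * a * s ≤ (1 + δ1) * γ ^ 2 * s := by
      have h3 := mul_le_mul_of_nonneg_right hfin (le_of_lt haa)
      have h4 : (1 + δ1) * (γ ^ 2 * s / a) * a = (1 + δ1) * γ ^ 2 * s := by
        field_simp
      nlinarith [h3, h4]
    linarith
  -- zero on T01
  have hzero1 : ∀ i ∈ T01, h i = 0 := by
    intro i hi
    have hsum0 : ∑ j ∈ T01, (h j) ^ 2 = 0 := by rw [← hsdef]; exact hs0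
    have hzz := (Finset.sum_eq_zero_iff_of_nonneg fun j _ => sq_nonneg (h j)).1 hsum0 i hi
    exact pow_eq_zero_iff (by norm_num : (2:ℕ) ≠ 0) |>.1 hzz
  -- zero on T0ᶜ
  have hzero2 : ∀ i ∈ T0ᶜ, h i = 0 := by
    have hb : ∑ i ∈ T0ᶜ, |h i| ≤ 0 := by
      have := hconeFinal
      rw [hs0, Real.sqrt_zero, mul_zero] at this
      exact this
    have hz : ∑ i ∈ T0ᶜ, |h i| = 0 :=
      le_antisymm hb (Finset.sum_nonneg fun i _ => abs_nonneg _)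
    intro i hi
    have := (Finset.sum_eq_zero_iff_of_nonneg fun j _ => abs_nonneg (h j)).1 hz i hi
    exact abs_eq_zero.1 this
  funext i
  have hz : h i = 0 := by
    by_cases hiT0 : i ∈ T0
    · exact hzero1 i (Finset.mem_union_left _ hiT0)
    · exact hzero2 i (Finset.mem_compl.2 hiT0)
  have := happ i
  rw [hz] at this
  linarith [this.symm, sub_eq_zero.1 this.symm]
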